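/- For all x > 0 and all 0 < α < 1/2, ∫_{x − z_α}^{x − z_{2α}} φ(t) dt > ∫_{x + z_α}^{∞} φ(t) dt. -/

import Mathlib

open Real MeasureTheory Set

/-- Standard normal probability density function. -/
noncomputable def stdPhi (x : ℝ) : ℝ := (Real.sqrt (2 * Real.pi))⁻¹ * Real.exp (-x ^ 2 / 2)

/-- Standard normal cumulative distribution function. -/
noncomputable def stdPhiCDF (x : ℝ) : ℝ := ∫ t in Set.Iic x, stdPhi t

lemma stdPhi_pos (x : ℝ) : 0 < stdPhi x := by
  unfold stdPhi
  have : (0:ℝ) < Real.sqrt (2 * Real.pi) := Real.sqrt_pos.mpr (by positivity)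
  positivity

lemma stdPhi_cont : Continuous stdPhi := by
  unfold stdPhi; fun_prop

lemma stdPhi_integrable : Integrable stdPhi := by
  have h : Integrable (fun x : ℝ => Real.exp (-(1/2 : ℝ) * x ^ 2)) :=
    integrable_exp_neg_mul_sq (by norm_num)
  have h2 := h.const_mul (Real.sqrt (2 * Real.pi))⁻¹
  convert h2 using 2 with x
  unfold stdPhi
  ring_nf

lemma stdPhi_integral : ∫ t, stdPhi t = 1 := by
  have h : ∫ x : ℝ, Real.exp (-(1/2 : ℝ) * x ^ 2) = Real.sqrt (π / (1/2)) :=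
    integral_gaussian (1/2)
  have h2 : ∫ t, stdPhi t = (Real.sqrt (2 * π))⁻¹ * ∫ x : ℝ, Real.exp (-(1/2 : ℝ) * x ^ 2) := by
    rw [← integral_const_mul]
    congr 1 with t
    unfold stdPhi
    ring_nf
  rw [h2, h, show π / (1/2) = 2 * π by ring]
  have : (0:ℝ) < Real.sqrt (2 * π) := Real.sqrt_pos.mpr (by positivity)
  field_simp

lemma stdPhiCDF_sub (a b : ℝ) :
    stdPhiCDF b - stdPhiCDF a = ∫ t in a..b, stdPhi t :=
  intervalIntegral.integral_Iic_sub_Iic stdPhi_integrable.integrableOn stdPhi_integrable.integrableOn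

lemma stdPhiCDF_hasDerivAt (x : ℝ) : HasDerivAt stdPhiCDF (stdPhi x) x := by
  have h : ∀ y, stdPhiCDF y = stdPhiCDF 0 + ∫ t in (0:ℝ)..y, stdPhi t := by
    intro y
    rw [← stdPhiCDF_sub 0 y]; ring
  have hd : HasDerivAt (fun y => stdPhiCDF 0 + ∫ t in (0:ℝ)..y, stdPhi t) (stdPhi x) x := by
    refine HasDerivAt.const_add _ ?_
    refine intervalIntegral.integral_hasDerivAt_right
      (stdPhi_integrable.intervalIntegrable) ?_ stdPhi_cont.continuousAt
    exact stdPhi_cont.stronglyMeasurableAtFilter _ _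
  exact hd.congr_of_eventuallyEq (Filter.Eventually.of_forall fun y => h y)

lemma stdPhi_even (t : ℝ) : stdPhi (-t) = stdPhi t := by
  unfold stdPhi; rw [neg_sq]

lemma integral_Ioi_stdPhi (y : ℝ) : ∫ t in Ioi y, stdPhi t = 1 - stdPhiCDF y := by
  have h := intervalIntegral.integral_Iic_add_Ioi (b := y) stdPhi_integrable.integrableOn
    stdPhi_integrable.integrableOn
  rw [stdPhi_integral] at h
  unfold stdPhiCDF
  linarith

lemma stdPhiCDF_neg (x : ℝ) : stdPhiCDF (-x) = 1 - stdPhiCDF x := by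
  have h1 : stdPhiCDF (-x) = ∫ t in Iic (-x), stdPhi (-t) := by
    unfold stdPhiCDF
    congr 1 with t
    rw [stdPhi_even]
  rw [h1, integral_comp_neg_Iic, neg_neg, integral_Ioi_stdPhi]

lemma stdPhiCDF_strictMono : StrictMono stdPhiCDF := by
  intro a b hab
  have h := stdPhiCDF_sub a b
  have hpos : 0 < ∫ t in a..b, stdPhi t :=
    intervalIntegral.intervalIntegral_pos_of_pos
      (stdPhi_integrable.intervalIntegrable) stdPhi_pos hab
  linarith

lemma stdPhiCDF_zero : stdPhiCDF 0 = 1/2 := by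
  have := stdPhiCDF_neg 0
  rw [neg_zero] at this
  linarith

lemma stdPhiCDF_tendsto : Filter.Tendsto stdPhiCDF Filter.atTop (nhds 1) := by
  have h : Filter.Tendsto (fun y => ∫ t in (0:ℝ)..y, stdPhi t) Filter.atTop
      (nhds (∫ t in Ioi (0:ℝ), stdPhi t)) :=
    intervalIntegral_tendsto_integral_Ioi 0 stdPhi_integrable.integrableOn Filter.tendsto_id
  have heq : ∀ y, stdPhiCDF y = stdPhiCDF 0 + ∫ t in (0:ℝ)..y, stdPhi t := by
    intro y; rw [← stdPhiCDF_sub 0 y]; ring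
  have h2 : Filter.Tendsto (fun y => stdPhiCDF 0 + ∫ t in (0:ℝ)..y, stdPhi t) Filter.atTop
      (nhds (stdPhiCDF 0 + ∫ t in Ioi (0:ℝ), stdPhi t)) :=
    (tendsto_const_nhds).add h
  have h3 := h2.congr fun y => (heq y).symm
  have h4 : stdPhiCDF 0 + ∫ t in Ioi (0:ℝ), stdPhi t = 1 := by
    rw [integral_Ioi_stdPhi, stdPhiCDF_zero]
    norm_num
  rwa [h4] at h3

theorem integral_inequality
    (α : ℝ) (hα0 : 0 < α) (hα1 : α < 1 / 2)
    (za zb : ℝ) (hza : 1 - stdPhiCDF za = α) (hzb : 1 - stdPhiCDF zb = 2 * α)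
    (x : ℝ) (hx : 0 < x) :
    (∫ t in (x - za)..(x - zb), stdPhi t) > ∫ t in Set.Ioi (x + za), stdPhi t := by
  -- basic facts about za, zb
  have hza' : stdPhiCDF za = 1 - α := by linarith
  have hzb' : stdPhiCDF zb = 1 - 2 * α := by linarith
  have hza_pos : 0 < za := by
    have : stdPhiCDF 0 < stdPhiCDF za := by rw [stdPhiCDF_zero, hza']; linarith
    exact stdPhiCDF_strictMono.lt_iff_lt.mp this
  have hzb_lt : zb < za := by
    have : stdPhiCDF zb < stdPhiCDF za := by rw [hza', hzb']; linarith
    exact stdPhiCDF_strictMono.lt_iff_lt.mp this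
  set F : ℝ → ℝ := fun y => stdPhiCDF (y - zb) - stdPhiCDF (y - za) + stdPhiCDF (y + za) with hF_def
  set G : ℝ → ℝ := fun y => stdPhi (y - zb) - stdPhi (y - za) + stdPhi (y + za) with hG_def
  have hF : ∀ y, HasDerivAt F (G y) y := by
    intro y
    have h1 : HasDerivAt (fun y : ℝ => stdPhiCDF (y - zb)) (stdPhi (y - zb)) y := by
      simpa [Function.comp_def] using (stdPhiCDF_hasDerivAt (y - zb)).comp y ((hasDerivAt_id y).sub_const zb)
    have h2 : HasDerivAt (fun y : ℝ => stdPhiCDF (y - za)) (stdPhi (y - za)) y := by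
      simpa [Function.comp_def] using (stdPhiCDF_hasDerivAt (y - za)).comp y ((hasDerivAt_id y).sub_const za)
    have h3 : HasDerivAt (fun y : ℝ => stdPhiCDF (y + za)) (stdPhi (y + za)) y := by
      simpa [Function.comp_def] using (stdPhiCDF_hasDerivAt (y + za)).comp y ((hasDerivAt_id y).add_const za)
    exact (h1.sub h2).add h3
  have hderiv : ∀ y, deriv F y = G y := fun y => (hF y).deriv
  have hFcont : Continuous F := by
    have : Differentiable ℝ F := fun y => (hF y).differentiableAt
    exact this.continuous
  have hF0 : F 0 = 1 := by
    have e1 : (0:ℝ) - zb = -zb := by ring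
    have e2 : (0:ℝ) - za = -za := by ring
    have e3 : (0:ℝ) + za = za := by ring
    simp only [hF_def, e1, e2, e3, stdPhiCDF_neg]
    linarith
  have hFtendsto : Filter.Tendsto F Filter.atTop (nhds 1) := by
    have t1 : Filter.Tendsto (fun y : ℝ => stdPhiCDF (y - zb)) Filter.atTop (nhds 1) :=
      stdPhiCDF_tendsto.comp (Filter.tendsto_atTop_add_const_right _ (-zb)
        (by exact Filter.tendsto_id))
    have t2 : Filter.Tendsto (fun y : ℝ => stdPhiCDF (y - za)) Filter.atTop (nhds 1) :=
      stdPhiCDF_tendsto.comp (Filter.tendsto_atTop_add_const_right _ (-za)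
        (by exact Filter.tendsto_id))
    have t3 : Filter.Tendsto (fun y : ℝ => stdPhiCDF (y + za)) Filter.atTop (nhds 1) :=
      stdPhiCDF_tendsto.comp (Filter.tendsto_atTop_add_const_right _ za Filter.tendsto_id)
    have := (t1.sub t2).add t3
    norm_num at this
    convert this using 2
  -- factorization of G
  have hGfact : ∀ y, G y = stdPhi (y - za) *
      (Real.exp ((zb - za) * y + (za ^ 2 - zb ^ 2) / 2) + Real.exp (-(2 * za) * y) - 1) := by
    intro y
    have e1 : (-(y - zb) ^ 2 / 2 : ℝ) =
        -(y - za) ^ 2 / 2 + ((zb - za) * y + (za ^ 2 - zb ^ 2) / 2) := by ring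
    have e2 : (-(y + za) ^ 2 / 2 : ℝ) = -(y - za) ^ 2 / 2 + -(2 * za) * y := by ring
    simp only [hG_def, stdPhi]
    rw [e1, e2]
    simp only [Real.exp_add]
    ring
  -- once G is nonpositive it stays negative
  have hGkey : ∀ y z : ℝ, y < z → G y ≤ 0 → G z < 0 := by
    intro y z hyz hGy
    have hPy := stdPhi_pos (y - za)
    have hPz := stdPhi_pos (z - za)
    rw [hGfact y] at hGy
    rw [hGfact z]
    have huy : Real.exp ((zb - za) * y + (za ^ 2 - zb ^ 2) / 2) +
        Real.exp (-(2 * za) * y) - 1 ≤ 0 := by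
      by_contra h
      push_neg at h
      have := mul_pos hPy h
      linarith
    have l1 : Real.exp ((zb - za) * z + (za ^ 2 - zb ^ 2) / 2) <
        Real.exp ((zb - za) * y + (za ^ 2 - zb ^ 2) / 2) := by
      apply Real.exp_lt_exp.mpr
      have : (zb - za) * z < (zb - za) * y := by nlinarith
      linarith
    have l2 : Real.exp (-(2 * za) * z) < Real.exp (-(2 * za) * y) := by
      apply Real.exp_lt_exp.mpr
      nlinarith
    exact mul_neg_of_pos_of_neg hPz (by linarith)
  -- main claim : F x > 1
  have hFx : 1 < F x := by
    by_cases hcase : ∀ y ∈ Ioo 0 x, 0 < G y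
    · have hmono : StrictMonoOn F (Icc 0 x) := by
        apply strictMonoOn_of_deriv_pos (convex_Icc 0 x) hFcont.continuousOn
        intro y hy
        rw [interior_Icc] at hy
        rw [hderiv]
        exact hcase y hy
      have := hmono (left_mem_Icc.mpr hx.le) (right_mem_Icc.mpr hx.le) hx
      linarith [hF0]
    · push_neg at hcase
      obtain ⟨y0, hy0, hGy0⟩ := hcase
      have hanti : StrictAntiOn F (Ici x) := by
        apply strictAntiOn_of_deriv_neg (convex_Ici x) hFcont.continuousOn
        intro y hy
        rw [interior_Ici] at hy
        rw [hderiv]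
        exact hGkey y0 y (lt_trans hy0.2 hy) hGy0
      have h1 : F (x + 1) < F x :=
        hanti (self_mem_Ici) (by simp : x + 1 ∈ Ici x) (by linarith)
      have h2 : 1 ≤ F (x + 1) := by
        apply le_of_tendsto hFtendsto
        filter_upwards [Filter.eventually_gt_atTop (x + 1)] with y hy
        exact (hanti (by simp : x + 1 ∈ Ici x) (le_of_lt (by linarith : x < y) : y ∈ Ici x) hy).le
      linarith
  -- translate back
  have hL : ∫ t in (x - za)..(x - zb), stdPhi t = stdPhiCDF (x - zb) - stdPhiCDF (x - za) :=
    (stdPhiCDF_sub _ _).symm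
  have hR : ∫ t in Set.Ioi (x + za), stdPhi t = 1 - stdPhiCDF (x + za) := integral_Ioi_stdPhi _
  rw [hL, hR]
  have : F x = stdPhiCDF (x - zb) - stdPhiCDF (x - za) + stdPhiCDF (x + za) := rfl
  linarith
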